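/- There are uncountably many pairwise non-isomorphic subsemigroups of ℕ × ℕ; that is, there is a family of subsemigroups of ℕ × ℕ of cardinality the continuum such that no two distinct members of the family are isomorphic as semigroups. -/

import Mathlib

namespace NNcons

def Gn (S : Set ℕ) : Set ℕ := {g | (∃ n : ℕ, g = 2*n+2) ∨ (∃ s ∈ S, g = 2*s+5)}

lemma gn_pos {S : Set ℕ} {g : ℕ} (h : g ∈ Gn S) : 0 < g := by
  rcases h with ⟨n, rfl⟩ | ⟨s, _, rfl⟩ <;> omega

def A (S : Set ℕ) : AddSubsemigroup (ℕ+ × ℕ+) where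
  carrier := {p | ∃ m : Multiset ℕ, (∀ x ∈ m, x ∈ Gn S) ∧
      (p.1 : ℕ) = Multiset.card m ∧ (p.2 : ℕ) = m.sum}
  add_mem' := by
    rintro p q ⟨m1, h1, hc1, hs1⟩ ⟨m2, h2, hc2, hs2⟩
    refine ⟨m1 + m2, ?_, ?_, ?_⟩
    · intro x hx
      rcases Multiset.mem_add.1 hx with hx | hx
      · exact h1 x hx
      · exact h2 x hx
    · simp [Prod.fst_add, PNat.add_coe, hc1, hc2]
    · simp [Prod.snd_add, PNat.add_coe, hs1, hs2]

lemma mem_gen {S : Set ℕ} {g : ℕ} (h : g ∈ Gn S) :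
    ((1 : ℕ+), (⟨g, gn_pos h⟩ : ℕ+)) ∈ A S := by
  exact ⟨{g}, by simpa using h, by simp, by simp⟩

lemma snd_mem_of_fst_one {S : Set ℕ} {p : ℕ+ × ℕ+} (hp : p ∈ A S)
    (h1 : (p.1 : ℕ) = 1) : (p.2 : ℕ) ∈ Gn S := by
  obtain ⟨m, hmem, hc, hs⟩ := hp
  have hcm : Multiset.card m = 1 := by omega
  obtain ⟨a, rfl⟩ := Multiset.card_eq_one.1 hcm
  simp only [Multiset.sum_singleton] at hs
  rw [hs]
  exact hmem a (by simp)

lemma decomp {S : Set ℕ} {p : ℕ+ × ℕ+} (hp : p ∈ A S) (h2 : 2 ≤ (p.1 : ℕ)) :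
    ∃ a ∈ A S, ∃ b ∈ A S, p = a + b := by
  obtain ⟨m, hmem, hc, hs⟩ := hp
  have hm0 : m ≠ 0 := by
    intro h; rw [h, Multiset.card_zero] at hc; omega
  obtain ⟨x, hxm⟩ := Multiset.exists_mem_of_ne_zero hm0
  obtain ⟨m', rfl⟩ := Multiset.exists_cons_of_mem hxm
  have hx : x ∈ Gn S := hmem x (by simp)
  have hm'0 : m' ≠ 0 := by
    intro h; rw [h, Multiset.card_cons, Multiset.card_zero] at hc; omega
  obtain ⟨y, hym⟩ := Multiset.exists_mem_of_ne_zero hm'0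
  obtain ⟨m'', rfl⟩ := Multiset.exists_cons_of_mem hym
  have hy : y ∈ Gn S := hmem y (by simp)
  have hcardpos : 0 < Multiset.card (y ::ₘ m'') := by simp
  have hsumpos : 0 < (y ::ₘ m'').sum := by
    have : 0 < y := gn_pos hy
    simp only [Multiset.sum_cons]; omega
  refine ⟨((1 : ℕ+), ⟨x, gn_pos hx⟩), mem_gen hx,
    ((⟨_, hcardpos⟩ : ℕ+), (⟨_, hsumpos⟩ : ℕ+)), ⟨y ::ₘ m'', fun z hz => hmem z (by simp [hz]), rfl, rfl⟩, ?_⟩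
  apply Prod.ext
  · apply PNat.coe_injective
    simp only [Prod.fst_add, PNat.add_coe, hc]
    show _ = 1 + Multiset.card (y ::ₘ m'')
    simp [Multiset.card_cons]; omega
  · apply PNat.coe_injective
    simp only [Prod.snd_add, PNat.add_coe, hs]
    simp [Multiset.sum_cons]
    rfl

end NNcons

namespace NNcons

lemma gn_two {S : Set ℕ} {g : ℕ} (h : g ∈ Gn S) : 2 ≤ g := by
  rcases h with ⟨n, rfl⟩ | ⟨s, _, rfl⟩ <;> omega

lemma image_fst_one {S T : Set ℕ} (ψ : (A S) ≃+ (A T)) (x : A S)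
    (hx : ((x : ℕ+ × ℕ+)).1 = 1) : ((ψ x : ℕ+ × ℕ+)).1 = 1 := by
  by_contra hne
  have h1 : 1 ≤ (((ψ x : ℕ+ × ℕ+)).1 : ℕ) := ((ψ x : ℕ+ × ℕ+)).1.pos
  have hne' : (((ψ x : ℕ+ × ℕ+)).1 : ℕ) ≠ 1 := by
    intro h; exact hne (PNat.coe_eq_one_iff.1 h)
  have h2 : 2 ≤ (((ψ x : ℕ+ × ℕ+)).1 : ℕ) := by omega
  obtain ⟨a, ha, b, hb, hab⟩ := decomp (ψ x).2 h2
  have hsum : ψ x = (⟨a, ha⟩ : A T) + ⟨b, hb⟩ := Subtype.ext hab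
  have hx2 : x = ψ.symm ⟨a, ha⟩ + ψ.symm ⟨b, hb⟩ := by
    have h := congrArg ψ.symm hsum
    rwa [ψ.symm_apply_apply, map_add] at h
  have hfst : (x : ℕ+ × ℕ+).1 =
      (ψ.symm ⟨a, ha⟩ : ℕ+ × ℕ+).1 + (ψ.symm ⟨b, hb⟩ : ℕ+ × ℕ+).1 := by
    rw [hx2]; rfl
  have hc := congrArg (fun z : ℕ+ => (z : ℕ)) hfst
  simp only [hx, PNat.add_coe, PNat.one_coe] at hc
  have p1 := ((ψ.symm ⟨a, ha⟩ : ℕ+ × ℕ+)).1.pos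
  have p2 := ((ψ.symm ⟨b, hb⟩ : ℕ+ × ℕ+)).1.pos
  omega

lemma iso_gen {S T : Set ℕ} (ψ : (A S) ≃+ (A T)) (g : ℕ) (hg : g ∈ Gn S) :
    ∃ h : ℕ, ∃ hh : h ∈ Gn T,
      ((ψ ⟨((1:ℕ+), ⟨g, gn_pos hg⟩), mem_gen hg⟩ : A T) : ℕ+ × ℕ+)
        = ((1:ℕ+), (⟨h, gn_pos hh⟩ : ℕ+)) := by
  set q := ψ ⟨((1:ℕ+), ⟨g, gn_pos hg⟩), mem_gen hg⟩ with hq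
  have h1 : ((q : ℕ+ × ℕ+)).1 = 1 := image_fst_one ψ _ rfl
  have h1' : (((q : ℕ+ × ℕ+)).1 : ℕ) = 1 := by rw [h1]; rfl
  have hmem := snd_mem_of_fst_one q.2 h1'
  refine ⟨(((q : ℕ+ × ℕ+)).2 : ℕ), hmem, ?_⟩
  apply Prod.ext
  · exact h1
  · rfl

end NNcons

namespace NNcons

theorem key {S T : Set ℕ} (φ : (A S) ≃+ (A T)) : S ⊆ T := by
  classical
  intro s hsS
  choose F hFmem hFval using iso_gen φ
  choose Finv hImem hIval using iso_gen φ.symm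
  -- M1 : sum relations are preserved
  have hM1 : ∀ (g1 g2 g3 g4 : ℕ) (h1 : g1 ∈ Gn S) (h2 : g2 ∈ Gn S) (h3 : g3 ∈ Gn S)
      (h4 : g4 ∈ Gn S), g1 + g2 = g3 + g4 →
      F g1 h1 + F g2 h2 = F g3 h3 + F g4 h4 := by
    intro g1 g2 g3 g4 h1 h2 h3 h4 hsum
    have e : (⟨((1:ℕ+), ⟨g1, gn_pos h1⟩), mem_gen h1⟩ : A S)
          + ⟨((1:ℕ+), ⟨g2, gn_pos h2⟩), mem_gen h2⟩
        = ⟨((1:ℕ+), ⟨g3, gn_pos h3⟩), mem_gen h3⟩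
          + ⟨((1:ℕ+), ⟨g4, gn_pos h4⟩), mem_gen h4⟩ := by
      apply Subtype.ext
      apply Prod.ext
      · rfl
      · apply PNat.coe_injective
        exact hsum
    have e2 := congrArg φ e
    rw [map_add, map_add] at e2
    have e3 := congrArg (fun z : A T => ((z : ℕ+ × ℕ+))) e2
    simp only [AddMemClass.coe_add] at e3
    rw [hFval g1 h1, hFval g2 h2, hFval g3 h3, hFval g4 h4] at e3
    have e4 := congrArg (fun p : ℕ+ × ℕ+ => p.2) e3
    have e5 := congrArg (fun z : ℕ+ => (z : ℕ)) e4
    exact e5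
  -- injectivity
  have hinj : ∀ g g' (hg : g ∈ Gn S) (hg' : g' ∈ Gn S), F g hg = F g' hg' → g = g' := by
    intro g g' hg hg' hEq
    have e : φ ⟨((1:ℕ+), ⟨g, gn_pos hg⟩), mem_gen hg⟩
        = φ ⟨((1:ℕ+), ⟨g', gn_pos hg'⟩), mem_gen hg'⟩ := by
      apply Subtype.ext
      rw [hFval g hg, hFval g' hg']
      exact Prod.ext rfl (Subtype.ext hEq)
    have h2 := φ.injective e
    have h3 := congrArg (fun z : A S => (((z : ℕ+ × ℕ+)).2 : ℕ)) h2
    simpa using h3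
  -- surjectivity
  have hsurj : ∀ h (hh : h ∈ Gn T), ∃ g, ∃ hg : g ∈ Gn S, F g hg = h := by
    intro h hh
    refine ⟨Finv h hh, hImem h hh, ?_⟩
    have e : (⟨((1:ℕ+), ⟨Finv h hh, gn_pos (hImem h hh)⟩), mem_gen (hImem h hh)⟩ : A S)
        = φ.symm ⟨((1:ℕ+), ⟨h, gn_pos hh⟩), mem_gen hh⟩ := by
      apply Subtype.ext
      rw [hIval h hh]
      rfl
    have e2 := congrArg φ e
    rw [φ.apply_symm_apply] at e2
    have e4 : ((φ ⟨((1:ℕ+), ⟨Finv h hh, gn_pos (hImem h hh)⟩), mem_gen (hImem h hh)⟩ : A T) : ℕ+ × ℕ+)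
        = ((1:ℕ+), (⟨h, gn_pos hh⟩ : ℕ+)) := by rw [e2]; rfl
    have e5 := (hFval (Finv h hh) (hImem h hh)).symm.trans e4
    have e6 := congrArg (fun p : ℕ+ × ℕ+ => ((p.2 : ℕ))) e5
    simpa using e6
  -- the arithmetic endgame
  have hev : ∀ n : ℕ, 2*n+2 ∈ Gn S := fun n => Or.inl ⟨n, rfl⟩
  have hodd : (2*s+5) ∈ Gn S := Or.inr ⟨s, hsS, rfl⟩
  set u : ℕ → ℕ := fun n => F (2*n+2) (hev n) with hu
  have hu2 : ∀ n, 2 ≤ u n := fun n => gn_two (hFmem _ (hev n))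
  have E1 : ∀ n, u (n+1) + u 0 = u n + u 1 := by
    intro n
    exact hM1 (2*(n+1)+2) (2*0+2) (2*n+2) (2*1+2) (hev (n+1)) (hev 0) (hev n) (hev 1) (by ring)
  have hrelodd : ∀ t (ht : (2*t+5) ∈ Gn S),
      F (2*t+5) ht + F (2*t+5) ht = u (t+1) + u (t+2) := by
    intro t ht
    exact hM1 (2*t+5) (2*t+5) (2*(t+1)+2) (2*(t+2)+2) ht ht (hev (t+1)) (hev (t+2)) (by ring)
  have hne01 : u 0 ≠ u 1 := by
    intro hEq
    have := hinj _ _ (hev 0) (hev 1) hEq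
    omega
  have hlt : u 0 < u 1 := by
    rcases lt_or_ge (u 0) (u 1) with h | h
    · exact h
    · exfalso
      have hstep : ∀ n, u (n+1) + 1 ≤ u n := by
        intro n; have := E1 n; omega
      have hdesc : ∀ n, u n + n ≤ u 0 := by
        intro n; induction n with
        | zero => omega
        | succ k ih => have := hstep k; omega
      have h1 := hdesc (u 0)
      have h2 := hu2 (u 0)
      omega
  obtain ⟨b, hbdef⟩ : ∃ b, u 1 = u 0 + b := ⟨u 1 - u 0, by omega⟩
  have hb1 : 1 ≤ b := by omega
  have C2 : ∀ n, u n = u 0 + n * b := by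
    intro n; induction n with
    | zero => simp
    | succ k ih =>
      have h1 := E1 k
      have h2 : (k+1) * b = k * b + b := by ring
      linarith
  -- u 0 = 2
  have h2T : (2:ℕ) ∈ Gn T := Or.inl ⟨0, by norm_num⟩
  obtain ⟨g2, hg2, hFg2⟩ := hsurj 2 h2T
  have hu0 : u 0 = 2 := by
    have hg2' := hg2
    rcases hg2' with ⟨k, rfl⟩ | ⟨t, htS, rfl⟩
    · have hk : u k = 2 := hFg2
      have hC := C2 k
      rw [hC] at hk
      have hle : u 0 ≤ 2 := hk ▸ Nat.le_add_right (u 0) (k * b)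
      have h20 := hu2 0
      omega
    · exfalso
      have hrel := hrelodd t hg2
      rw [hFg2] at hrel
      have h1 := hu2 (t+1)
      have h2 := hu2 (t+2)
      have hC1 := C2 (t+1)
      have hC2 := C2 (t+2)
      have h3 : (t+2)*b = (t+1)*b + b := by ring
      linarith
  -- b = 1 or b = 2
  have h4T : (4:ℕ) ∈ Gn T := Or.inl ⟨1, by norm_num⟩
  obtain ⟨g4, hg4, hFg4⟩ := hsurj 4 h4T
  have hb12 : b = 1 ∨ b = 2 := by
    have hg4' := hg4
    rcases hg4' with ⟨k, rfl⟩ | ⟨t, htS, rfl⟩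
    · have hk : u k = 4 := hFg4
      have hC := C2 k
      have hkb : k * b = 2 := by linarith
      have hk0 : 0 < k := by
        rcases Nat.eq_zero_or_pos k with rfl | h
        · simp at hkb
        · exact h
      have hble : b ≤ 2 := by
        calc b ≤ k * b := Nat.le_mul_of_pos_left b hk0
        _ = 2 := hkb
      omega
    · exfalso
      have hrel := hrelodd t hg4
      rw [hFg4] at hrel
      have hC1 := C2 (t+1)
      have hC2 := C2 (t+2)
      have hsum : (t+1)*b + (t+2)*b = 4 := by linarith
      have hble : b ≤ 4 := by
        have h1 : b ≤ (t+2)*b := Nat.le_mul_of_pos_left b (by omega)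
        linarith
      interval_cases b <;> omega
  -- conclude
  have hrel := hrelodd s hodd
  have hC1 := C2 (s+1)
  have hC2 := C2 (s+2)
  rcases hb12 with rfl | rfl
  · exfalso; omega
  · have hFo : F (2*s+5) hodd = 2*s+5 := by omega
    have hmem := hFmem (2*s+5) hodd
    rw [hFo] at hmem
    rcases hmem with ⟨k, hk⟩ | ⟨t, htT, ht⟩
    · omega
    · have : s = t := by omega
      rw [this]; exact htT

end NNcons

namespace NNcons

theorem iso_eq {S T : Set ℕ} (h : Nonempty ((A S) ≃+ (A T))) : S = T := by
  obtain ⟨φ⟩ := h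
  exact Set.Subset.antisymm (key φ) (key φ.symm)

end NNcons

/-- There are uncountably many (continuum many) pairwise non-isomorphic
subsemigroups of `ℕ × ℕ`, the direct square of the free monogenic semigroup. -/
theorem uncountably_many_nonisomorphic_subsemigroups_of_N_times_N :
    ∃ F : Set (AddSubsemigroup (ℕ+ × ℕ+)),
      Cardinal.mk F = Cardinal.continuum ∧
      ∀ A ∈ F, ∀ B ∈ F, A ≠ B → ¬ Nonempty (A ≃+ B) := by
  refine ⟨Set.range (fun S : Set ℕ => NNcons.A S), ?_, ?_⟩
  · have hinj : Function.Injective (fun S : Set ℕ => NNcons.A S) := by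
      intro S T h
      have h' : NNcons.A S = NNcons.A T := h
      exact NNcons.iso_eq (h' ▸ ⟨AddEquiv.refl _⟩)
    rw [Cardinal.mk_range_eq _ hinj, Cardinal.mk_set, Cardinal.mk_nat, Cardinal.two_power_aleph0]
  · rintro A ⟨S, rfl⟩ B ⟨T, rfl⟩ hne ⟨ψ⟩
    exact hne (congrArg _ (NNcons.iso_eq ⟨ψ⟩))
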